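/- arXiv:2107.06331 — 2 statements merged into one kernel-verified Lean document; each statement's English description precedes it below -/
import Mathlib

section
/- Consider the set 𝒢 of congestion games with at most n users and resource cost functions in 𝓛 for positive basis functions b_1,…,b_m, and let PoA* ≥ 1. Suppose ν > 0, ρ ≥ 1/PoA*, γ ∈ (0,1], κ > 0 and functions F_j : {0,…,n+1} → ℝ with F_j(0) = F_j(n+1) = 0 and b_j(0) = 0 satisfy, for every j ∈ {1,…,m} and every (x,y,z) ∈ I(n): (1/ν)·b_j(y)·y − (ρ/ν)·b_j(x)·x + (x−z)·F_j(x) − (y−z)·F_j(x+1) ≥ 0 and b_j(y)·y − γ·b_j(x)·x + (x−z)·F_j(x) − (y−z)·F_j(x+1) + κ·[Σ_{k=1}^x F_j(k) − Σ_{k=1}^y F_j(k)] ≥ 0. Then the linear local incentive mechanism T with T(b_j) = F_j − b_j satisfies PoA(T) ≤ 1/ρ ≤ PoA* and PoS(T) ≤ 1/γ. -/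
open scoped BigOperators ENNReal

noncomputable section

/-- A congestion game with incentives: `n` users, `R` resources,
finite nonempty action sets `act i ⊆ 2^E`, resource cost functions `cost e`
and incentive functions `tax e`. -/
structure CGame where
  n : ℕ
  R : ℕ
  act : Fin n → Finset (Finset (Fin R))
  act_ne : ∀ i, (act i).Nonempty
  cost : Fin R → ℕ → ℝ
  tax : Fin R → ℕ → ℝ

namespace CGame

variable (G : CGame)

/-- An assignment of actions (not necessarily feasible). -/
abbrev Assign := Fin G.n → Finset (Fin G.R)

/-- Feasibility of an assignment. -/
def IsAssign (a : G.Assign) : Prop := ∀ i, a i ∈ G.act i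

/-- The load `|a|_e`: the number of users selecting resource `e`. -/
def load (a : G.Assign) (e : Fin G.R) : ℕ :=
  (Finset.univ.filter fun i => e ∈ a i).card

/-- The social cost `SC(a)`. -/
def SC (a : G.Assign) : ℝ := ∑ i, ∑ e ∈ a i, G.cost e (G.load a e)

/-- The cost `C_i(a)` experienced by user `i` (resource costs plus incentives). -/
def userCost (i : Fin G.n) (a : G.Assign) : ℝ :=
  ∑ e ∈ a i, (G.cost e (G.load a e) + G.tax e (G.load a e))

/-- Pure Nash equilibrium. -/
def IsNE (a : G.Assign) : Prop :=
  G.IsAssign a ∧ ∀ i : Fin G.n, ∀ s ∈ G.act i,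
    G.userCost i a ≤ G.userCost i (Function.update a i s)

/-- The Rosenthal potential of the game with incentives. -/
def potential (a : G.Assign) : ℝ :=
  ∑ e, ∑ k ∈ Finset.Icc 1 (G.load a e), (G.cost e k + G.tax e k)

/-- The minimum achievable social cost. -/
def MinCost : ℝ := sInf {c | ∃ a, G.IsAssign a ∧ G.SC a = c}

end CGame

/-- A (local) incentive mechanism: a map from resource cost functions to
incentive functions. -/
abbrev Mech : Type := (ℕ → ℝ) → (ℕ → ℝ)

/-- Membership of a game in the class `𝒢` of congestion games with at most `n`
users, resource cost functions that are nonnegative linear combinations of the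
basis functions `b`, and incentives generated by the mechanism `T`. -/
def InClass (n m : ℕ) (b : Fin m → ℕ → ℝ) (T : Mech) (G : CGame) : Prop :=
  G.n ≤ n ∧
  (∀ e, ∃ α : Fin m → ℝ, (∀ j, 0 ≤ α j) ∧ ∀ x, G.cost e x = ∑ j, α j * b j x) ∧
  (∀ e x, G.tax e x = T (G.cost e) x)

/-- Price of anarchy of mechanism `T` over the class of congestion games with
at most `n` users and costs generated by the basis `b`. -/
def PoA (n m : ℕ) (b : Fin m → ℕ → ℝ) (T : Mech) : ℝ≥0∞ :=
  ⨆ G : CGame, ⨆ _ : InClass n m b T G ∧ 0 < G.MinCost,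
    ⨆ a : G.Assign, ⨆ _ : G.IsNE a, ENNReal.ofReal (G.SC a / G.MinCost)

/-- Price of stability of mechanism `T` over the class of congestion games with
at most `n` users and costs generated by the basis `b`. -/
def PoS (n m : ℕ) (b : Fin m → ℕ → ℝ) (T : Mech) : ℝ≥0∞ :=
  ⨆ G : CGame, ⨆ _ : InClass n m b T G ∧ 0 < G.MinCost,
    ⨅ a : {a : G.Assign // G.IsNE a}, ENNReal.ofReal (G.SC a.1 / G.MinCost)

/-- The marginal cost mechanism `T^mc(ℓ)(x) = (x−1)·[ℓ(x) − ℓ(x−1)]`. -/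
def Tmc : Mech := fun ℓ x => ((x : ℝ) - 1) * (ℓ x - ℓ (x - 1))

namespace CGame

variable (G : CGame)

lemma load_le (a : G.Assign) (e : Fin G.R) : G.load a e ≤ G.n := by
  classical
  calc (Finset.univ.filter fun i => e ∈ a i).card ≤ Finset.univ.card :=
        Finset.card_filter_le _ _
    _ = G.n := by simp

lemma sum_users' (a : G.Assign) (g : Fin G.n → Fin G.R → ℝ) :
    ∑ i, ∑ e ∈ a i, g i e
      = ∑ e, ∑ i ∈ Finset.univ.filter (fun i => e ∈ a i), g i e := by
  classical
  have h1 : ∀ i, ∑ e ∈ a i, g i e = ∑ e, if e ∈ a i then g i e else 0 := by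
    intro i
    rw [Finset.sum_ite_mem, Finset.univ_inter]
  simp_rw [h1]
  rw [Finset.sum_comm]
  refine Finset.sum_congr rfl fun e _ => ?_
  rw [Finset.sum_filter]

lemma sum_users (a : G.Assign) (f : Fin G.R → ℝ) :
    ∑ i, ∑ e ∈ a i, f e = ∑ e, (G.load a e : ℝ) * f e := by
  classical
  rw [G.sum_users' a (fun _ e => f e)]
  refine Finset.sum_congr rfl fun e _ => ?_
  rw [Finset.sum_const, load, nsmul_eq_mul]

lemma load_update_add (a : G.Assign) (i : Fin G.n) (s : Finset (Fin G.R)) (e : Fin G.R) :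
    G.load (Function.update a i s) e + (if e ∈ a i then 1 else 0)
      = G.load a e + (if e ∈ s then 1 else 0) := by
  classical
  unfold load
  rw [Finset.card_filter, Finset.card_filter]
  have key : ∀ k, (if e ∈ Function.update a i s k then 1 else 0) =
      Function.update (fun k => if e ∈ a k then (1:ℕ) else 0) i (if e ∈ s then 1 else 0) k := by
    intro k
    rcases eq_or_ne k i with rfl | h
    · simp
    · simp [Function.update_of_ne h]
  rw [Finset.sum_congr rfl (fun k _ => key k)]
  rw [Finset.sum_update_of_mem (Finset.mem_univ i)]
  rw [← Finset.sum_erase_add Finset.univ _ (Finset.mem_univ i), Finset.erase_eq]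
  ring

end CGame

namespace CGame

variable (G : CGame)

lemma load_update_mem_mem (a : G.Assign) (i : Fin G.n) (s : Finset (Fin G.R)) (e : Fin G.R)
    (h1 : e ∈ a i) (h2 : e ∈ s) :
    G.load (Function.update a i s) e = G.load a e := by
  have := G.load_update_add a i s e; simp [h1, h2] at this; omega

lemma load_update_not_mem (a : G.Assign) (i : Fin G.n) (s : Finset (Fin G.R)) (e : Fin G.R)
    (h1 : e ∉ a i) (h2 : e ∈ s) :
    G.load (Function.update a i s) e = G.load a e + 1 := by
  have := G.load_update_add a i s e; simp [h1, h2] at this; omega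

lemma load_update_mem_not (a : G.Assign) (i : Fin G.n) (s : Finset (Fin G.R)) (e : Fin G.R)
    (h1 : e ∈ a i) (h2 : e ∉ s) :
    G.load (Function.update a i s) e + 1 = G.load a e := by
  have := G.load_update_add a i s e; simp [h1, h2] at this; omega

lemma load_update_not_not (a : G.Assign) (i : Fin G.n) (s : Finset (Fin G.R)) (e : Fin G.R)
    (h1 : e ∉ a i) (h2 : e ∉ s) :
    G.load (Function.update a i s) e = G.load a e := by
  have := G.load_update_add a i s e; simp [h1, h2] at this; omega

lemma potential_exact (a : G.Assign) (i : Fin G.n) (s : Finset (Fin G.R)) :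
    G.potential (Function.update a i s) - G.potential a
      = G.userCost i (Function.update a i s) - G.userCost i a := by
  classical
  have key : ∀ e : Fin G.R,
      (∑ k ∈ Finset.Icc 1 (G.load (Function.update a i s) e), (G.cost e k + G.tax e k))
        - ∑ k ∈ Finset.Icc 1 (G.load a e), (G.cost e k + G.tax e k)
      = (if e ∈ s then G.cost e (G.load (Function.update a i s) e)
            + G.tax e (G.load (Function.update a i s) e) else 0)
        - (if e ∈ a i then G.cost e (G.load a e) + G.tax e (G.load a e) else 0) := by
    intro e
    by_cases h2 : e ∈ s <;> by_cases h1 : e ∈ a i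
    · rw [G.load_update_mem_mem a i s e h1 h2]; simp [h1, h2]
    · have hL := G.load_update_not_mem a i s e h1 h2
      rw [hL, Finset.sum_Icc_succ_top (by omega : 1 ≤ G.load a e + 1)]
      simp [h1, h2]
    · have hL := G.load_update_mem_not a i s e h1 h2
      rw [← hL, Finset.sum_Icc_succ_top (by omega : 1 ≤ G.load (Function.update a i s) e + 1)]
      simp [h1, h2]
    · rw [G.load_update_not_not a i s e h1 h2]; simp [h1, h2]
  have hl : G.potential (Function.update a i s) - G.potential a
      = ∑ e, ((if e ∈ s then G.cost e (G.load (Function.update a i s) e)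
            + G.tax e (G.load (Function.update a i s) e) else 0)
        - (if e ∈ a i then G.cost e (G.load a e) + G.tax e (G.load a e) else 0)) := by
    rw [potential, potential, ← Finset.sum_sub_distrib]
    exact Finset.sum_congr rfl fun e _ => key e
  rw [hl, Finset.sum_sub_distrib]
  congr 1
  · rw [userCost, Function.update_self]
    rw [Finset.sum_ite_mem, Finset.univ_inter]
  · rw [userCost]
    rw [Finset.sum_ite_mem, Finset.univ_inter]

lemma exists_isNE : ∃ a, G.IsNE a ∧ ∀ a', G.IsAssign a' → G.potential a ≤ G.potential a' := by
  classical
  have hne : (Finset.univ.filter fun a : G.Assign => ∀ i, a i ∈ G.act i).Nonempty := by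
    refine ⟨fun i => (G.act_ne i).choose, ?_⟩
    simp only [Finset.mem_filter, Finset.mem_univ, true_and]
    exact fun i => (G.act_ne i).choose_spec
  obtain ⟨a, ha, hmin⟩ := Finset.exists_min_image _ G.potential hne
  have haA : G.IsAssign a := (Finset.mem_filter.mp ha).2
  have hmin' : ∀ a', G.IsAssign a' → G.potential a ≤ G.potential a' := by
    intro a' ha'
    exact hmin a' (Finset.mem_filter.mpr ⟨Finset.mem_univ _, ha'⟩)
  refine ⟨a, ⟨haA, fun i t ht => ?_⟩, hmin'⟩
  have hfeas : G.IsAssign (Function.update a i t) := by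
    intro k
    rcases eq_or_ne k i with rfl | h
    · simpa using ht
    · simpa [Function.update_of_ne h] using haA k
  have h1 := hmin' _ hfeas
  have h2 := G.potential_exact a i t
  linarith

lemma exists_minCost : ∃ o, G.IsAssign o ∧ G.SC o = G.MinCost := by
  classical
  have hfin : {c | ∃ a, G.IsAssign a ∧ G.SC a = c}.Finite := by
    have hsub : {c | ∃ a, G.IsAssign a ∧ G.SC a = c} ⊆ G.SC '' Set.univ := by
      rintro c ⟨a, _, rfl⟩; exact ⟨a, trivial, rfl⟩
    exact (Set.finite_univ.image _).subset hsub
  have hne : {c | ∃ a, G.IsAssign a ∧ G.SC a = c}.Nonempty := by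
    refine ⟨G.SC (fun i => (G.act_ne i).choose), fun i => (G.act_ne i).choose, ?_, rfl⟩
    exact fun i => (G.act_ne i).choose_spec
  obtain ⟨o, ho, hsc⟩ := hne.csInf_mem hfin
  exact ⟨o, ho, hsc⟩

lemma minCost_le (a : G.Assign) (ha : G.IsAssign a) : G.MinCost ≤ G.SC a := by
  classical
  have hfin : {c | ∃ a, G.IsAssign a ∧ G.SC a = c}.Finite := by
    have hsub : {c | ∃ a, G.IsAssign a ∧ G.SC a = c} ⊆ G.SC '' Set.univ := by
      rintro c ⟨a, _, rfl⟩; exact ⟨a, trivial, rfl⟩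
    exact (Set.finite_univ.image _).subset hsub
  exact csInf_le hfin.bddBelow ⟨a, ha, rfl⟩

end CGame

open Finset in
lemma main_bound (n m : ℕ) (b : Fin m → ℕ → ℝ) (hb0 : ∀ j, b j 0 = 0)
    (ν ρ γ κ : ℝ) (hν : 0 < ν) (hκ : 0 < κ)
    (F : Fin m → ℕ → ℝ)
    (hfeasPoA : ∀ j, ∀ x y z : ℕ, x ≤ n → y ≤ n → z ≤ x → z ≤ y →
      1 ≤ x + y - z → x + y - z ≤ n →
      (1 / ν) * (b j y * y) - (ρ / ν) * (b j x * x)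
        + ((x : ℝ) - (z : ℝ)) * F j x - ((y : ℝ) - (z : ℝ)) * F j (x + 1) ≥ 0)
    (hfeasPoS : ∀ j, ∀ x y z : ℕ, x ≤ n → y ≤ n → z ≤ x → z ≤ y →
      1 ≤ x + y - z → x + y - z ≤ n →
      b j y * y - γ * (b j x * x)
        + ((x : ℝ) - (z : ℝ)) * F j x - ((y : ℝ) - (z : ℝ)) * F j (x + 1)
        + κ * ((∑ k ∈ Finset.Icc 1 x, F j k) - ∑ k ∈ Finset.Icc 1 y, F j k) ≥ 0)
    (T : Mech)
    (hT : ∀ α : Fin m → ℝ, (∀ j, 0 ≤ α j) →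
      ∀ x, T (fun y => ∑ j, α j * b j y) x = ∑ j, α j * (F j x - b j x))
    (G : CGame) (hG : InClass n m b T G)
    (a : G.Assign) (hNE : G.IsNE a) (o : G.Assign) (ho : G.IsAssign o) :
    ρ * G.SC a ≤ G.SC o ∧ (G.potential a ≤ G.potential o → γ * G.SC a ≤ G.SC o) := by
  classical
  obtain ⟨hn, hcost', htax⟩ := hG
  choose α hαpos hcost using hcost'
  -- combined (cost + tax) function equals ∑ j, α j • F j
  have hFh : ∀ e k, G.cost e k + G.tax e k = ∑ j, α e j * F j k := by
    intro e k
    have hce : G.cost e = fun y => ∑ j, α e j * b j y := funext (hcost e)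
    rw [htax e k, hce, hT (α e) (hαpos e) k]
    simp only
    rw [← Finset.sum_add_distrib]
    exact Finset.sum_congr rfl fun j _ => by ring
  set Fh : Fin G.R → ℕ → ℝ := fun e k => ∑ j, α e j * F j k with hFhdef
  -- abbreviations
  set x : Fin G.R → ℕ := fun e => G.load a e with hx
  set y : Fin G.R → ℕ := fun e => G.load o e with hy
  set z : Fin G.R → ℕ :=
    fun e => (Finset.univ.filter fun i => e ∈ o i ∧ e ∈ a i).card with hz
  set w : Fin G.R → ℕ :=
    fun e => (Finset.univ.filter fun i => e ∈ o i ∧ e ∉ a i).card with hw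
  have hzw : ∀ e, z e + w e = y e := by
    intro e
    have h := Finset.card_filter_add_card_filter_not
      (s := Finset.univ.filter fun i => e ∈ o i) (p := fun i => e ∈ a i)
    rw [Finset.filter_filter, Finset.filter_filter] at h
    simpa [hz, hw, hy, CGame.load] using h
  have hzx : ∀ e, z e ≤ x e := by
    intro e
    refine Finset.card_le_card fun i hi => ?_
    simp only [Finset.mem_filter] at hi ⊢
    exact ⟨hi.1, hi.2.2⟩
  have hxw : ∀ e, x e + w e ≤ G.n := by
    intro e
    have hd : Disjoint (Finset.univ.filter fun i => e ∈ a i)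
        (Finset.univ.filter fun i => e ∈ o i ∧ e ∉ a i) := by
      rw [Finset.disjoint_left]
      intro i h1 h2
      simp only [Finset.mem_filter] at h1 h2
      exact h2.2.2 h1.2
    calc x e + w e
        = ((Finset.univ.filter fun i => e ∈ a i)
            ∪ (Finset.univ.filter fun i => e ∈ o i ∧ e ∉ a i)).card :=
          (Finset.card_union_of_disjoint hd).symm
      _ ≤ (Finset.univ : Finset (Fin G.n)).card :=
          Finset.card_le_card (Finset.union_subset
            (Finset.filter_subset _ _) (Finset.filter_subset _ _))
      _ = G.n := by simp
  -- aggregated Nash inequality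
  have hNEsum : ∑ e, (((x e : ℝ) - z e) * Fh e (x e) - ((y e : ℝ) - z e) * Fh e (x e + 1)) ≤ 0 := by
    have hstep : ∑ i, G.userCost i a ≤ ∑ i, G.userCost i (Function.update a i (o i)) :=
      Finset.sum_le_sum fun i _ => hNE.2 i (o i) (ho i)
    have hL : ∑ i, G.userCost i a = ∑ e, (x e : ℝ) * Fh e (x e) := by
      unfold CGame.userCost
      simp_rw [hFh]
      exact G.sum_users a (fun e => Fh e (x e))
    have hR : ∑ i, G.userCost i (Function.update a i (o i))
        = ∑ e, ((z e : ℝ) * Fh e (x e) + (w e : ℝ) * Fh e (x e + 1)) := by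
      have h1 : ∀ i, G.userCost i (Function.update a i (o i))
          = ∑ e ∈ o i, (if e ∈ a i then Fh e (x e) else Fh e (x e + 1)) := by
        intro i
        rw [CGame.userCost, Function.update_self]
        refine Finset.sum_congr rfl fun e he => ?_
        by_cases h : e ∈ a i
        · rw [G.load_update_mem_mem a i (o i) e h he, hFh]
          simp [h, hFhdef, hx]
        · rw [G.load_update_not_mem a i (o i) e h he, hFh]
          simp [h, hFhdef, hx]
      simp_rw [h1]
      rw [G.sum_users' o (fun i e => if e ∈ a i then Fh e (x e) else Fh e (x e + 1))]
      refine Finset.sum_congr rfl fun e _ => ?_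
      rw [Finset.sum_ite, Finset.sum_const, Finset.sum_const,
        Finset.filter_filter, Finset.filter_filter]
      have hc1 : (Finset.univ.filter fun i => e ∈ o i ∧ e ∈ a i).card = z e := rfl
      have hc2 : (Finset.univ.filter fun i => e ∈ o i ∧ ¬ e ∈ a i).card = w e := rfl
      rw [hc1, hc2, nsmul_eq_mul, nsmul_eq_mul]
    rw [hL, hR] at hstep
    have hre : ∑ e, (((x e : ℝ) - z e) * Fh e (x e) - ((y e : ℝ) - z e) * Fh e (x e + 1))
        = ∑ e, ((x e : ℝ) * Fh e (x e))
          - ∑ e, ((z e : ℝ) * Fh e (x e) + (w e : ℝ) * Fh e (x e + 1)) := by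
      rw [← Finset.sum_sub_distrib]
      refine Finset.sum_congr rfl fun e _ => ?_
      have hce : (y e : ℝ) = (z e : ℝ) + (w e : ℝ) := by exact_mod_cast (hzw e).symm
      rw [hce]; ring
    rw [hre]; linarith
  -- social cost formulas
  have hSCa : G.SC a = ∑ e, (x e : ℝ) * G.cost e (x e) := G.sum_users a _
  have hSCo : G.SC o = ∑ e, (y e : ℝ) * G.cost e (y e) := G.sum_users o _
  -- side conditions for the feasibility constraints
  have hside : ∀ e : Fin G.R, x e ≤ n ∧ y e ≤ n ∧ z e ≤ x e ∧ z e ≤ y e ∧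
      (¬(x e = 0 ∧ y e = 0) → 1 ≤ x e + y e - z e ∧ x e + y e - z e ≤ n) := by
    intro e
    have h1 := hzw e
    have h2 := hzx e
    have h3 := hxw e
    have h4 : x e ≤ G.n := G.load_le a e
    have h5 : y e ≤ G.n := G.load_le o e
    exact ⟨h4.trans hn, h5.trans hn, h2, by omega, fun h => ⟨by omega, by omega⟩⟩
  -- PoA aggregate inequality
  have htermA : ∀ e : Fin G.R,
      0 ≤ (1/ν) * (G.cost e (y e) * y e) - (ρ/ν) * (G.cost e (x e) * x e)
        + ((x e : ℝ) - z e) * Fh e (x e) - ((y e : ℝ) - z e) * Fh e (x e + 1) := by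
    intro e
    have hexp : (1/ν) * (G.cost e (y e) * y e) - (ρ/ν) * (G.cost e (x e) * x e)
        + ((x e : ℝ) - z e) * Fh e (x e) - ((y e : ℝ) - z e) * Fh e (x e + 1)
        = ∑ j, α e j * ((1/ν) * (b j (y e) * y e) - (ρ/ν) * (b j (x e) * x e)
            + ((x e : ℝ) - (z e : ℝ)) * F j (x e) - ((y e : ℝ) - (z e : ℝ)) * F j (x e + 1)) := by
      rw [hcost e (y e), hcost e (x e)]
      simp only [hFhdef]
      rw [Finset.sum_mul, Finset.sum_mul, Finset.mul_sum, Finset.mul_sum,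
        Finset.mul_sum, Finset.mul_sum, ← Finset.sum_sub_distrib,
        ← Finset.sum_add_distrib, ← Finset.sum_sub_distrib]
      exact Finset.sum_congr rfl fun j _ => by ring
    rw [hexp]
    refine Finset.sum_nonneg fun j _ => mul_nonneg (hαpos e j) ?_
    obtain ⟨hs1, hs2, hs3, hs4, hs5⟩ := hside e
    by_cases h0 : x e = 0 ∧ y e = 0
    · have hz0 : z e = 0 := by omega
      rw [h0.1, h0.2, hz0]
      simp [hb0 j]
    · obtain ⟨h6, h7⟩ := hs5 h0
      exact hfeasPoA j (x e) (y e) (z e) hs1 hs2 hs3 hs4 h6 h7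
  have hA : 0 ≤ (1/ν) * G.SC o - (ρ/ν) * G.SC a
      + ∑ e, (((x e : ℝ) - z e) * Fh e (x e) - ((y e : ℝ) - z e) * Fh e (x e + 1)) := by
    have h1 : (1/ν) * G.SC o - (ρ/ν) * G.SC a
        + ∑ e, (((x e : ℝ) - z e) * Fh e (x e) - ((y e : ℝ) - z e) * Fh e (x e + 1))
        = ∑ e, ((1/ν) * (G.cost e (y e) * y e) - (ρ/ν) * (G.cost e (x e) * x e)
            + ((x e : ℝ) - z e) * Fh e (x e) - ((y e : ℝ) - z e) * Fh e (x e + 1)) := by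
      simp only [hSCo, hSCa, Finset.mul_sum, ← Finset.sum_sub_distrib,
        ← Finset.sum_add_distrib]
      exact Finset.sum_congr rfl fun e _ => by ring
    rw [h1]
    exact Finset.sum_nonneg fun e _ => htermA e
  constructor
  · -- PoA conclusion
    have h2 : (ρ/ν) * G.SC a ≤ (1/ν) * G.SC o := by linarith
    have h3 := mul_le_mul_of_nonneg_left h2 hν.le
    have hν' : ν ≠ 0 := ne_of_gt hν
    field_simp at h3
    linarith
  · -- PoS conclusion
    intro hpot
    have hPotFh : ∀ u : G.Assign,
        G.potential u = ∑ e, ∑ k ∈ Finset.Icc 1 (G.load u e), Fh e k := by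
      intro u
      rw [CGame.potential]
      exact Finset.sum_congr rfl fun e _ =>
        Finset.sum_congr rfl fun k _ => hFh e k
    have hswap : ∀ e (L : ℕ), ∑ k ∈ Finset.Icc 1 L, Fh e k
        = ∑ j, α e j * ∑ k ∈ Finset.Icc 1 L, F j k := by
      intro e L
      simp only [hFhdef]
      rw [Finset.sum_comm]
      exact Finset.sum_congr rfl fun j _ => (Finset.mul_sum _ _ _).symm
    have htermS : ∀ e : Fin G.R,
        0 ≤ G.cost e (y e) * y e - γ * (G.cost e (x e) * x e)
          + ((x e : ℝ) - z e) * Fh e (x e) - ((y e : ℝ) - z e) * Fh e (x e + 1)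
          + κ * ((∑ k ∈ Finset.Icc 1 (x e), Fh e k) - ∑ k ∈ Finset.Icc 1 (y e), Fh e k) := by
      intro e
      have hexp : G.cost e (y e) * y e - γ * (G.cost e (x e) * x e)
          + ((x e : ℝ) - z e) * Fh e (x e) - ((y e : ℝ) - z e) * Fh e (x e + 1)
          + κ * ((∑ k ∈ Finset.Icc 1 (x e), Fh e k) - ∑ k ∈ Finset.Icc 1 (y e), Fh e k)
          = ∑ j, α e j * (b j (y e) * y e - γ * (b j (x e) * x e)
              + ((x e : ℝ) - (z e : ℝ)) * F j (x e) - ((y e : ℝ) - (z e : ℝ)) * F j (x e + 1)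
              + κ * ((∑ k ∈ Finset.Icc 1 (x e), F j k) - ∑ k ∈ Finset.Icc 1 (y e), F j k)) := by
        rw [hcost e (y e), hcost e (x e), hswap e (x e), hswap e (y e)]
        simp only [hFhdef]
        simp only [Finset.sum_mul, Finset.mul_sum, ← Finset.sum_sub_distrib,
          ← Finset.sum_add_distrib]
        refine Finset.sum_congr rfl fun j _ => ?_
        simp only [← Finset.mul_sum]
        ring
      rw [hexp]
      refine Finset.sum_nonneg fun j _ => mul_nonneg (hαpos e j) ?_
      obtain ⟨hs1, hs2, hs3, hs4, hs5⟩ := hside e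
      by_cases h0 : x e = 0 ∧ y e = 0
      · have hz0 : z e = 0 := by omega
        rw [h0.1, h0.2, hz0]
        simp [hb0 j]
      · obtain ⟨h6, h7⟩ := hs5 h0
        exact hfeasPoS j (x e) (y e) (z e) hs1 hs2 hs3 hs4 h6 h7
    have hS : 0 ≤ G.SC o - γ * G.SC a
        + ∑ e, (((x e : ℝ) - z e) * Fh e (x e) - ((y e : ℝ) - z e) * Fh e (x e + 1))
        + κ * (G.potential a - G.potential o) := by
      have h1 : G.SC o - γ * G.SC a
          + ∑ e, (((x e : ℝ) - z e) * Fh e (x e) - ((y e : ℝ) - z e) * Fh e (x e + 1))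
          + κ * (G.potential a - G.potential o)
          = ∑ e, (G.cost e (y e) * y e - γ * (G.cost e (x e) * x e)
            + ((x e : ℝ) - z e) * Fh e (x e) - ((y e : ℝ) - z e) * Fh e (x e + 1)
            + κ * ((∑ k ∈ Finset.Icc 1 (x e), Fh e k) - ∑ k ∈ Finset.Icc 1 (y e), Fh e k)) := by
        simp only [hSCo, hSCa, hPotFh a, hPotFh o, Finset.mul_sum,
          ← Finset.sum_sub_distrib, ← Finset.sum_add_distrib]
        exact Finset.sum_congr rfl fun e _ => by ring
      rw [h1]
      exact Finset.sum_nonneg fun e _ => htermS e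
    have hk : κ * (G.potential a - G.potential o) ≤ 0 :=
      mul_nonpos_of_nonneg_of_nonpos hκ.le (by linarith)
    linarith

/-- Over congestion games with at most `n` users and costs
generated by positive basis functions, if `ν > 0`, `ρ ≥ 1/PoA*`, `γ ∈ (0,1]`,
`κ > 0` and the functions `F_j` satisfy both families of linear constraints
(over `I(n)`), then the linear local mechanism `T` with `T(b_j) = F_j − b_j`
satisfies `PoA(T) ≤ 1/ρ ≤ PoA*` and `PoS(T) ≤ 1/γ`. -/
theorem bilinear_program_gives_PoA_and_PoS_bounds
    (n m : ℕ)
    (b : Fin m → ℕ → ℝ)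
    (hb0 : ∀ j, b j 0 = 0)
    (hbpos : ∀ j, ∀ x : ℕ, 1 ≤ x → x ≤ n → 0 < b j x)
    (PoAstar : ℝ) (hPoAstar : 1 ≤ PoAstar)
    (ν ρ γ κ : ℝ)
    (hν : 0 < ν) (hρ : 1 / PoAstar ≤ ρ) (hγ0 : 0 < γ) (hγ1 : γ ≤ 1) (hκ : 0 < κ)
    (F : Fin m → ℕ → ℝ)
    (hF0 : ∀ j, F j 0 = 0) (hFn1 : ∀ j, F j (n + 1) = 0)
    (hfeasPoA : ∀ j, ∀ x y z : ℕ, x ≤ n → y ≤ n → z ≤ x → z ≤ y →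
      1 ≤ x + y - z → x + y - z ≤ n →
      (1 / ν) * (b j y * y) - (ρ / ν) * (b j x * x)
        + ((x : ℝ) - (z : ℝ)) * F j x - ((y : ℝ) - (z : ℝ)) * F j (x + 1) ≥ 0)
    (hfeasPoS : ∀ j, ∀ x y z : ℕ, x ≤ n → y ≤ n → z ≤ x → z ≤ y →
      1 ≤ x + y - z → x + y - z ≤ n →
      b j y * y - γ * (b j x * x)
        + ((x : ℝ) - (z : ℝ)) * F j x - ((y : ℝ) - (z : ℝ)) * F j (x + 1)
        + κ * ((∑ k ∈ Finset.Icc 1 x, F j k) - ∑ k ∈ Finset.Icc 1 y, F j k) ≥ 0)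
    (T : Mech)
    (hT : ∀ α : Fin m → ℝ, (∀ j, 0 ≤ α j) →
      ∀ x, T (fun y => ∑ j, α j * b j y) x = ∑ j, α j * (F j x - b j x)) :
    PoA n m b T ≤ ENNReal.ofReal (1 / ρ) ∧
    ENNReal.ofReal (1 / ρ) ≤ ENNReal.ofReal PoAstar ∧
    PoS n m b T ≤ ENNReal.ofReal (1 / γ) := by
  have hPoAs : (0:ℝ) < PoAstar := by linarith
  have hρpos : (0:ℝ) < ρ := lt_of_lt_of_le (by positivity) hρ
  refine ⟨?_, ?_, ?_⟩
  · rw [PoA]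
    refine iSup_le fun G => iSup_le fun hGp => iSup_le fun a => iSup_le fun hNE => ?_
    obtain ⟨hG, hM⟩ := hGp
    obtain ⟨o, ho, hom⟩ := G.exists_minCost
    have hmain := (main_bound n m b hb0 ν ρ γ κ hν hκ F hfeasPoA hfeasPoS T hT
      G hG a hNE o ho).1
    refine ENNReal.ofReal_le_ofReal ?_
    rw [div_le_div_iff₀ hM hρpos, one_mul, ← hom, mul_comm]
    exact hmain
  · refine ENNReal.ofReal_le_ofReal ?_
    calc 1/ρ ≤ 1/(1/PoAstar) := one_div_le_one_div_of_le (by positivity) hρ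
      _ = PoAstar := one_div_one_div _
  · rw [PoS]
    refine iSup_le fun G => iSup_le fun hGp => ?_
    obtain ⟨hG, hM⟩ := hGp
    obtain ⟨aNE, haNE, hminpot⟩ := G.exists_isNE
    obtain ⟨o, ho, hom⟩ := G.exists_minCost
    have hmain := (main_bound n m b hb0 ν ρ γ κ hν hκ F hfeasPoA hfeasPoS T hT
      G hG aNE haNE o ho).2 (hminpot o ho)
    refine iInf_le_of_le ⟨aNE, haNE⟩ ?_
    refine ENNReal.ofReal_le_ofReal ?_
    rw [div_le_div_iff₀ hM hγ0, one_mul, ← hom, mul_comm]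
    exact hmain
end
end

section
/- Consider the set 𝒢 of congestion games with at most n users and resource cost functions in 𝓛 for positive basis functions b_1,…,b_m with b_j(1) = 1. Let T be a linear local incentive mechanism and set F_j(x) = b_j(x) + T(b_j)(x) for x ∈ {1,…,n}; assume F_j(1) = 1 and F_j(x) > 0 for all x. Then for every j ∈ {1,…,m} and all integers 0 ≤ v < u ≤ n: PoS(T) ≥ b_j(u)·u / [b_j(v)·v + Σ_{k=1}^{u−v} max_{v+k ≤ x ≤ u} F_j(x)]. -/
open scoped BigOperators ENNReal

noncomputable section

namespace PoS13

/-- coefficient of resource `e` in the lower-bound game -/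
def cf (u v : ℕ) (c : ℕ → ℝ) (e : Fin (u - v + 1)) : ℝ :=
  if (e : ℕ) = 0 then 1 else c (e : ℕ)

/-- the private resource of user `i` -/
def pr (u v : ℕ) (hvu : v < u) (i : Fin u) : Fin (u - v + 1) :=
  ⟨(i : ℕ) - v + 1, by have := i.isLt; omega⟩

/-- The lower-bound game: users `0,…,v-1` can only use the common resource `0`
(with cost `b j`), while user `i ∈ {v,…,u-1}` can either use resource `0` or a
private resource with cost `c (i-v+1) • b j`. -/
@[reducible]
def LBGame (m : ℕ) (b : Fin m → ℕ → ℝ) (T : Mech) (j : Fin m) (u v : ℕ)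
    (hvu : v < u) (c : ℕ → ℝ) : CGame where
  n := u
  R := u - v + 1
  act := fun i => if (i : ℕ) < v then {{(0 : Fin (u - v + 1))}}
    else {{(0 : Fin (u - v + 1))}, {pr u v hvu i}}
  act_ne := fun i => by split <;> simp
  cost := fun e x => cf u v c e * b j x
  tax := fun e x => T (fun y => cf u v c e * b j y) x

section Lemmas

variable {m : ℕ} (b : Fin m → ℕ → ℝ) (T : Mech) (j : Fin m) (u v : ℕ)
  (hvu : v < u) (c : ℕ → ℝ)

lemma pr_ne_zero (i : Fin u) : pr u v hvu i ≠ 0 := by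
  simp [pr, Fin.ext_iff]

lemma pr_inj {i i' : Fin u} (hi : v ≤ (i : ℕ)) (hi' : v ≤ (i' : ℕ))
    (h : pr u v hvu i = pr u v hvu i') : i = i' := by
  simp only [pr, Fin.mk.injEq] at h
  exact Fin.ext (by omega)

lemma act_cases {i : Fin u} {s : Finset (Fin (u - v + 1))}
    (hs : s ∈ (LBGame m b T j u v hvu c).act i) :
    s = {0} ∨ (v ≤ (i : ℕ) ∧ s = {pr u v hvu i}) := by
  simp only [LBGame] at hs
  split at hs
  · exact Or.inl (Finset.mem_singleton.mp hs)
  · rcases Finset.mem_insert.mp hs with h | h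
    · exact Or.inl h
    · exact Or.inr ⟨by omega, Finset.mem_singleton.mp h⟩

lemma card_filter_lt (w : ℕ) (hw : w ≤ u) :
    (Finset.univ.filter fun i : Fin u => (i : ℕ) < w).card = w := by
  rw [← Finset.card_range w]
  apply Finset.card_bij (fun (a : Fin u) _ => (a : ℕ))
  · intro a ha; simp only [Finset.mem_filter] at ha; simpa using ha.2
  · intro a ha a' ha' h; exact Fin.ext h
  · intro k hk
    simp only [Finset.mem_range] at hk
    exact ⟨⟨k, by omega⟩, by simpa using hk, rfl⟩

end Lemmas

end PoS13
namespace PoS13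

section Lemmas2

variable {m : ℕ} (b : Fin m → ℕ → ℝ) (T : Mech) (j : Fin m) (u v : ℕ)
  (hvu : v < u) (c : ℕ → ℝ)

lemma mem_zero_iff {a : (LBGame m b T j u v hvu c).Assign}
    (ha : (LBGame m b T j u v hvu c).IsAssign a) (i : Fin u) :
    (0 : Fin (u - v + 1)) ∈ a i ↔ a i = {(0 : Fin (u - v + 1))} := by
  constructor
  · intro h0
    rcases act_cases b T j u v hvu c (ha i) with h | ⟨_, h⟩
    · exact h
    · rw [h] at h0
      exact absurd (Finset.mem_singleton.mp h0).symm (pr_ne_zero u v hvu i)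
  · intro h; rw [h]; exact Finset.mem_singleton_self 0

lemma load_zero {a : (LBGame m b T j u v hvu c).Assign}
    (ha : (LBGame m b T j u v hvu c).IsAssign a) :
    (LBGame m b T j u v hvu c).load a (0 : Fin (u - v + 1)) =
      (Finset.univ.filter fun i => a i = ({0} : Finset (Fin (u - v + 1)))).card := by
  unfold CGame.load
  congr 1
  apply Finset.filter_congr
  intro i _
  exact mem_zero_iff b T j u v hvu c ha i

lemma load_pr {a : (LBGame m b T j u v hvu c).Assign}
    (ha : (LBGame m b T j u v hvu c).IsAssign a) (i : Fin u)
    (hi : a i = {pr u v hvu i}) :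
    (LBGame m b T j u v hvu c).load a (pr u v hvu i) = 1 := by
  have hvi : v ≤ (i : ℕ) := by
    rcases act_cases b T j u v hvu c (ha i) with h | ⟨h, _⟩
    · rw [hi] at h
      exact absurd (Finset.singleton_inj.mp h) (pr_ne_zero u v hvu i)
    · exact h
  unfold CGame.load
  rw [show (Finset.univ.filter fun i' => pr u v hvu i ∈ a i') = {i} from ?_]
  · exact Finset.card_singleton i
  ext i'
  simp only [Finset.mem_filter, Finset.mem_univ, true_and, Finset.mem_singleton]
  constructor
  · intro h
    rcases act_cases b T j u v hvu c (ha i') with h' | ⟨hvi', h'⟩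
    · rw [h'] at h
      exact absurd (Finset.mem_singleton.mp h) (pr_ne_zero u v hvu i)
    · rw [h'] at h
      exact (pr_inj u v hvu hvi hvi' (Finset.mem_singleton.mp h)).symm
  · rintro rfl; rw [hi]; exact Finset.mem_singleton_self _

lemma load_le (a : (LBGame m b T j u v hvu c).Assign) (e : Fin (u - v + 1)) :
    (LBGame m b T j u v hvu c).load a e ≤ u := by
  unfold CGame.load
  exact le_trans (Finset.card_filter_le _ _) (le_of_eq (Finset.card_fin _))

lemma one_le_load {a : (LBGame m b T j u v hvu c).Assign} {i : Fin u}
    {e : Fin (u - v + 1)} (he : e ∈ a i) :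
    1 ≤ (LBGame m b T j u v hvu c).load a e := by
  rw [Nat.one_le_iff_ne_zero]
  exact Finset.card_ne_zero_of_mem (Finset.mem_filter.mpr ⟨Finset.mem_univ i, he⟩)

lemma cf_pos (hc1 : ∀ k, 1 ≤ k → k ≤ u - v → 0 < c k) (e : Fin (u - v + 1)) :
    0 < cf u v c e := by
  unfold cf
  split
  · exact one_pos
  · exact hc1 _ (by omega) (by have := e.isLt; omega)

lemma tax_eq
    (hTlin : ∀ α : Fin m → ℝ, (∀ j, 0 ≤ α j) →
      ∀ x, T (fun y => ∑ j, α j * b j y) x = ∑ j, α j * T (b j) x)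
    (hc1 : ∀ k, 1 ≤ k → k ≤ u - v → 0 < c k) (e : Fin (u - v + 1)) (x : ℕ) :
    (LBGame m b T j u v hvu c).tax e x = cf u v c e * T (b j) x := by
  have hce : 0 ≤ cf u v c e := (cf_pos u v c hc1 e).le
  have hfun : (fun y => cf u v c e * b j y)
      = (fun y => ∑ j', (if j' = j then cf u v c e else 0) * b j' y) := by
    funext y
    simp [ite_mul, Finset.sum_ite_eq']
  show T (fun y => cf u v c e * b j y) x = _
  rw [hfun, hTlin _ (fun j' => by split <;> simp [hce])]
  simp [ite_mul, Finset.sum_ite_eq']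

end Lemmas2

end PoS13
namespace PoS13

section Lemmas3

variable {m : ℕ} (b : Fin m → ℕ → ℝ) (T : Mech) (j : Fin m) (u v : ℕ)
  (hvu : v < u) (c : ℕ → ℝ)

lemma cost_def (e : Fin (u - v + 1)) (x : ℕ) :
    (LBGame m b T j u v hvu c).cost e x = cf u v c e * b j x := rfl

lemma cf_zero : cf u v c (0 : Fin (u - v + 1)) = 1 := by simp [cf]

lemma SC_pos (hbj : ∀ x, 1 ≤ x → x ≤ u → 0 < b j x)
    (hc1 : ∀ k, 1 ≤ k → k ≤ u - v → 0 < c k)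
    {a : (LBGame m b T j u v hvu c).Assign}
    (ha : (LBGame m b T j u v hvu c).IsAssign a) :
    0 < (LBGame m b T j u v hvu c).SC a := by
  unfold CGame.SC
  apply Finset.sum_pos
  · intro i _
    apply Finset.sum_pos
    · intro e he
      rw [cost_def]
      exact mul_pos (cf_pos u v c hc1 e)
        (hbj _ (one_le_load b T j u v hvu c he) (load_le b T j u v hvu c a e))
    · rcases act_cases b T j u v hvu c (ha i) with h | ⟨_, h⟩ <;> rw [h] <;>
        exact Finset.singleton_nonempty _
  · exact ⟨⟨0, show 0 < u by omega⟩, Finset.mem_univ _⟩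

/-- The near-optimal assignment. -/
def astar : (LBGame m b T j u v hvu c).Assign := fun i =>
  if (i : ℕ) < v then {(0 : Fin (u - v + 1))} else {pr u v hvu i}

lemma astar_isAssign : (LBGame m b T j u v hvu c).IsAssign
    (astar b T j u v hvu c) := by
  intro i
  by_cases h : (i : ℕ) < v <;> simp [astar, LBGame, h]

lemma SC_astar (hb1 : b j 1 = 1) :
    (LBGame m b T j u v hvu c).SC (astar b T j u v hvu c)
      = b j v * v + ∑ k ∈ Finset.Icc 1 (u - v), c k := by
  have hload0 : (LBGame m b T j u v hvu c).load (astar b T j u v hvu c)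
      (0 : Fin (u - v + 1)) = v := by
    rw [load_zero b T j u v hvu c (astar_isAssign b T j u v hvu c)]
    rw [show (Finset.univ.filter fun i =>
        astar b T j u v hvu c i = ({0} : Finset (Fin (u - v + 1))))
        = (Finset.univ.filter fun i : Fin u => (i : ℕ) < v) from ?_]
    · exact card_filter_lt u v hvu.le
    apply Finset.filter_congr
    intro i _
    by_cases h : (i : ℕ) < v
    · simp [astar, h]
    · simp only [astar, if_neg h, h, iff_false]
      intro hcon
      exact pr_ne_zero u v hvu i (Finset.singleton_inj.mp hcon)
  have hloadp : ∀ i : Fin u, ¬ (i : ℕ) < v →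
      (LBGame m b T j u v hvu c).load (astar b T j u v hvu c) (pr u v hvu i) = 1 := by
    intro i h
    exact load_pr b T j u v hvu c (astar_isAssign b T j u v hvu c) i
      (by simp [astar, if_neg h])
  unfold CGame.SC
  show (∑ i : Fin u, ∑ e ∈ astar b T j u v hvu c i,
      (LBGame m b T j u v hvu c).cost e
        ((LBGame m b T j u v hvu c).load (astar b T j u v hvu c) e)) = _
  rw [← Finset.sum_filter_add_sum_filter_not Finset.univ (fun i : Fin u => (i : ℕ) < v)]
  have h1 : ∑ i ∈ Finset.univ.filter (fun i : Fin u => (i : ℕ) < v),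
      (∑ e ∈ astar b T j u v hvu c i,
        (LBGame m b T j u v hvu c).cost e
          ((LBGame m b T j u v hvu c).load (astar b T j u v hvu c) e))
      = b j v * v := by
    rw [Finset.sum_congr rfl (fun i hi => ?_), Finset.sum_const,
      card_filter_lt u v hvu.le, nsmul_eq_mul, mul_comm]
    have hiv : (i : ℕ) < v := (Finset.mem_filter.mp hi).2
    rw [show astar b T j u v hvu c i = {(0 : Fin (u - v + 1))} from by simp [astar, hiv],
      Finset.sum_singleton, cost_def, cf_zero, one_mul, hload0]
  have h2a : ∑ i ∈ Finset.univ.filter (fun i : Fin u => ¬ (i : ℕ) < v),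
      (∑ e ∈ astar b T j u v hvu c i,
        (LBGame m b T j u v hvu c).cost e
          ((LBGame m b T j u v hvu c).load (astar b T j u v hvu c) e))
      = ∑ i ∈ Finset.univ.filter (fun i : Fin u => ¬ (i : ℕ) < v),
          c ((i : ℕ) - v + 1) := by
    apply Finset.sum_congr rfl
    intro i hi
    have hiv : ¬ (i : ℕ) < v := (Finset.mem_filter.mp hi).2
    rw [show astar b T j u v hvu c i = {pr u v hvu i} from by simp [astar, hiv],
      Finset.sum_singleton, cost_def, hloadp i hiv, hb1, mul_one,
      show cf u v c (pr u v hvu i) = c ((i : ℕ) - v + 1) from by simp [cf, pr]]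
  have h2b : ∑ i ∈ Finset.univ.filter (fun i : Fin u => ¬ (i : ℕ) < v),
      c ((i : ℕ) - v + 1) = ∑ k ∈ Finset.Icc 1 (u - v), c k := by
    apply Finset.sum_nbij' (i := fun i : Fin u => (i : ℕ) - v + 1)
      (j := fun k => (⟨min (v + k - 1) (u - 1), by omega⟩ : Fin u))
    · intro a ha
      have := (Finset.mem_filter.mp ha).2
      have := a.isLt
      simp only [Finset.mem_Icc]
      omega
    · intro k hk
      simp only [Finset.mem_Icc] at hk
      simp only [Finset.mem_filter, Finset.mem_univ, true_and]
      omega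
    · intro a ha
      have := (Finset.mem_filter.mp ha).2
      have := a.isLt
      apply Fin.ext
      simp only
      omega
    · intro k hk
      simp only [Finset.mem_Icc] at hk
      simp only
      omega
    · intro a ha
      rfl
  rw [h1, h2a, h2b]

lemma bddBelow_SC (hbj : ∀ x, 1 ≤ x → x ≤ u → 0 < b j x)
    (hc1 : ∀ k, 1 ≤ k → k ≤ u - v → 0 < c k) :
    ∀ x ∈ {x | ∃ a, (LBGame m b T j u v hvu c).IsAssign a ∧
      (LBGame m b T j u v hvu c).SC a = x}, (0:ℝ) ≤ x := by
  rintro x ⟨a, ha, rfl⟩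
  exact (SC_pos b T j u v hvu c hbj hc1 ha).le

lemma minCost_le (hb1 : b j 1 = 1) (hbj : ∀ x, 1 ≤ x → x ≤ u → 0 < b j x)
    (hc1 : ∀ k, 1 ≤ k → k ≤ u - v → 0 < c k) :
    (LBGame m b T j u v hvu c).MinCost
      ≤ b j v * v + ∑ k ∈ Finset.Icc 1 (u - v), c k := by
  rw [← SC_astar b T j u v hvu c hb1]
  exact csInf_le ⟨0, bddBelow_SC b T j u v hvu c hbj hc1⟩
    ⟨astar b T j u v hvu c, astar_isAssign b T j u v hvu c, rfl⟩

lemma minCost_pos (hbj : ∀ x, 1 ≤ x → x ≤ u → 0 < b j x)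
    (hc1 : ∀ k, 1 ≤ k → k ≤ u - v → 0 < c k) :
    0 < (LBGame m b T j u v hvu c).MinCost := by
  have hfin : {x | ∃ a, (LBGame m b T j u v hvu c).IsAssign a ∧
      (LBGame m b T j u v hvu c).SC a = x}.Finite := by
    have : {x | ∃ a, (LBGame m b T j u v hvu c).IsAssign a ∧
        (LBGame m b T j u v hvu c).SC a = x}
        = (LBGame m b T j u v hvu c).SC '' {a | (LBGame m b T j u v hvu c).IsAssign a} := by
      ext x
      simp [Set.mem_image]
    rw [this]
    exact (Set.toFinite _).image _
  have hne : {x | ∃ a, (LBGame m b T j u v hvu c).IsAssign a ∧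
      (LBGame m b T j u v hvu c).SC a = x}.Nonempty :=
    ⟨_, astar b T j u v hvu c, astar_isAssign b T j u v hvu c, rfl⟩
  obtain ⟨a₁, ha₁, hEq⟩ := hne.csInf_mem hfin
  unfold CGame.MinCost
  rw [← hEq]
  exact SC_pos b T j u v hvu c hbj hc1 ha₁

end Lemmas3

end PoS13
namespace PoS13

section Lemmas4

variable {m : ℕ} (b : Fin m → ℕ → ℝ) (T : Mech) (j : Fin m) (u v : ℕ)
  (hvu : v < u) (c : ℕ → ℝ)

lemma SC_allzero {a : (LBGame m b T j u v hvu c).Assign}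
    (ha : ∀ i, a i = ({0} : Finset (Fin (u - v + 1)))) :
    (LBGame m b T j u v hvu c).SC a = u * b j u := by
  have hload : (LBGame m b T j u v hvu c).load a (0 : Fin (u - v + 1)) = u := by
    unfold CGame.load
    rw [Finset.filter_true_of_mem (fun i _ => by
      rw [ha i]; exact Finset.mem_singleton_self _)]
    exact Finset.card_fin _
  unfold CGame.SC
  rw [Finset.sum_congr rfl (fun i (_ : i ∈ Finset.univ) => by
    rw [ha i, Finset.sum_singleton, cost_def, cf_zero, one_mul, hload])]
  rw [Finset.sum_const, Finset.card_univ, Fintype.card_fin, nsmul_eq_mul]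

lemma inClass (n : ℕ) (hn : u ≤ n)
    (hc1 : ∀ k, 1 ≤ k → k ≤ u - v → 0 < c k) :
    InClass n m b T (LBGame m b T j u v hvu c) := by
  refine ⟨hn, fun e => ⟨fun j' => if j' = j then cf u v c e else 0,
    fun j' => by by_cases hj : j' = j <;> simp [hj, (cf_pos u v c hc1 e).le],
    fun x => by rw [cost_def]; simp [ite_mul, Finset.sum_ite_eq']⟩,
    fun e x => rfl⟩

lemma NE_all_zero
    (hTlin : ∀ α : Fin m → ℝ, (∀ j, 0 ≤ α j) →
      ∀ x, T (fun y => ∑ j, α j * b j y) x = ∑ j, α j * T (b j) x)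
    (hb1 : b j 1 = 1) (hF1' : b j 1 + T (b j) 1 = 1)
    (hc1 : ∀ k, 1 ≤ k → k ≤ u - v → 0 < c k)
    (hc2 : ∀ k x, 1 ≤ k → k ≤ u - v → v + k ≤ x → x ≤ u →
      b j x + T (b j) x < c k)
    {a : (LBGame m b T j u v hvu c).Assign}
    (hNE : (LBGame m b T j u v hvu c).IsNE a) :
    ∀ i, a i = ({0} : Finset (Fin (u - v + 1))) := by
  by_contra h
  obtain ⟨iw, hiw⟩ := not_forall.mp h
  set S := (Finset.univ.filter fun i => (0 : Fin (u - v + 1)) ∉ a i) with hS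
  have hSne : S.Nonempty := ⟨iw, Finset.mem_filter.mpr ⟨Finset.mem_univ _,
    fun h0 => hiw ((mem_zero_iff b T j u v hvu c hNE.1 iw).mp h0)⟩⟩
  set i₀ := S.min' hSne with hi₀def
  have hi₀S : i₀ ∈ S := S.min'_mem hSne
  have hi₀ne : a i₀ ≠ {(0 : Fin (u - v + 1))} := fun h =>
    (Finset.mem_filter.mp hi₀S).2 ((mem_zero_iff b T j u v hvu c hNE.1 i₀).mpr h)
  obtain ⟨hvi₀, hpr⟩ : v ≤ (i₀ : ℕ) ∧ a i₀ = {pr u v hvu i₀} := by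
    rcases act_cases b T j u v hvu c (hNE.1 i₀) with h' | h'
    · exact absurd h' hi₀ne
    · exact h'
  have hmin : ∀ i : Fin u, i < i₀ → a i = {(0 : Fin (u - v + 1))} := by
    intro i hi
    by_contra hne
    exact absurd (S.min'_le i (Finset.mem_filter.mpr ⟨Finset.mem_univ _,
      fun h0 => hne ((mem_zero_iff b T j u v hvu c hNE.1 i).mp h0)⟩))
      (not_le.mpr hi)
  set ℓ := (LBGame m b T j u v hvu c).load a (0 : Fin (u - v + 1)) with hℓdef
  have hℓ1 : (i₀ : ℕ) ≤ ℓ := by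
    rw [hℓdef, load_zero b T j u v hvu c hNE.1]
    calc (i₀ : ℕ) = (Finset.univ.filter fun i : Fin u => (i : ℕ) < (i₀ : ℕ)).card :=
          (card_filter_lt u _ i₀.isLt.le).symm
      _ ≤ _ := Finset.card_le_card (fun i hi => Finset.mem_filter.mpr
          ⟨Finset.mem_univ _, hmin i (Fin.lt_def.mpr (Finset.mem_filter.mp hi).2)⟩)
  have hℓ2 : ℓ + 1 ≤ u := by
    rw [hℓdef, load_zero b T j u v hvu c hNE.1]
    have hsub : (Finset.univ.filter fun i => a i = ({0} : Finset (Fin (u - v + 1))))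
        ⊆ Finset.univ.erase i₀ := by
      intro i hi
      refine Finset.mem_erase.mpr ⟨fun he => hi₀ne ?_, Finset.mem_univ _⟩
      rw [← he]
      exact (Finset.mem_filter.mp hi).2
    calc (Finset.univ.filter fun i => a i = ({0} : Finset (Fin (u - v + 1)))).card + 1
        ≤ (Finset.univ.erase i₀).card + 1 := by
          exact Nat.add_le_add_right (Finset.card_le_card hsub) 1
      _ = u := by
          rw [Finset.card_erase_of_mem (Finset.mem_univ _), Finset.card_fin]
          show u - 1 + 1 = u
          omega
  have hmem0 : ({0} : Finset (Fin (u - v + 1))) ∈ (LBGame m b T j u v hvu c).act i₀ := by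
    show _ ∈ (if (i₀ : ℕ) < v then _ else _)
    rw [if_neg (not_lt.mpr hvi₀)]
    exact Finset.mem_insert_self _ _
  have hNEineq := hNE.2 i₀ {(0 : Fin (u - v + 1))} hmem0
  have hLHS : (LBGame m b T j u v hvu c).userCost i₀ a = c ((i₀ : ℕ) - v + 1) := by
    unfold CGame.userCost
    rw [hpr, Finset.sum_singleton, cost_def,
      tax_eq b T j u v hvu c hTlin hc1, load_pr b T j u v hvu c hNE.1 i₀ hpr,
      show cf u v c (pr u v hvu i₀) = c ((i₀ : ℕ) - v + 1) from by simp [cf, pr],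
      ← mul_add, hF1', mul_one]
  have hRHS : (LBGame m b T j u v hvu c).userCost i₀
      (Function.update a i₀ ({0} : Finset (Fin (u - v + 1))))
      = b j (ℓ + 1) + T (b j) (ℓ + 1) := by
    have hload' : (LBGame m b T j u v hvu c).load
        (Function.update a i₀ ({0} : Finset (Fin (u - v + 1))))
        (0 : Fin (u - v + 1)) = ℓ + 1 := by
      unfold CGame.load
      rw [show (Finset.univ.filter fun i =>
          (0 : Fin (u - v + 1)) ∈ Function.update a i₀ ({0} : Finset (Fin (u - v + 1))) i)
          = insert i₀ (Finset.univ.filter fun i => (0 : Fin (u - v + 1)) ∈ a i) from ?_]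
      · rw [Finset.card_insert_of_notMem]
        · rfl
        · intro hcon
          have := (Finset.mem_filter.mp hcon).2
          rw [hpr] at this
          exact pr_ne_zero u v hvu i₀ (Finset.mem_singleton.mp this).symm
      ext i'
      simp only [Finset.mem_filter, Finset.mem_univ, true_and, Finset.mem_insert]
      by_cases hii : i' = i₀
      · subst hii
        simp [Function.update_self]
      · simp [Function.update_of_ne hii, hii]
    unfold CGame.userCost
    rw [Function.update_self, Finset.sum_singleton, cost_def,
      tax_eq b T j u v hvu c hTlin hc1, hload', cf_zero, one_mul, one_mul]
  rw [hLHS, hRHS] at hNEineq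
  have hk1 : 1 ≤ (i₀ : ℕ) - v + 1 := by omega
  have hk2 : (i₀ : ℕ) - v + 1 ≤ u - v := by have := i₀.isLt; omega
  have := hc2 ((i₀ : ℕ) - v + 1) (ℓ + 1) hk1 hk2 (by omega) hℓ2
  linarith

end Lemmas4

end PoS13

/-- Over congestion games with at most `n` users and costs
generated by positive basis functions with `b_j(1) = 1`: for any linear local
mechanism `T`, setting `F_j = b_j + T(b_j)` (assumed positive with
`F_j(1) = 1`), for every `j` and all integers `0 ≤ v < u ≤ n`,
`PoS(T) ≥ b_j(u)·u / [b_j(v)·v + Σ_{k=1}^{u−v} max_{v+k ≤ x ≤ u} F_j(x)]`. -/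
theorem PoS_lower_bound_for_linear_mechanisms
    (n m : ℕ)
    (b : Fin m → ℕ → ℝ)
    (hb0 : ∀ j, b j 0 = 0) (hb1 : ∀ j, b j 1 = 1)
    (hbpos : ∀ j, ∀ x : ℕ, 1 ≤ x → x ≤ n → 0 < b j x)
    (T : Mech)
    (hTlin : ∀ α : Fin m → ℝ, (∀ j, 0 ≤ α j) →
      ∀ x, T (fun y => ∑ j, α j * b j y) x = ∑ j, α j * T (b j) x)
    (F : Fin m → ℕ → ℝ)
    (hF : ∀ j, ∀ x : ℕ, 1 ≤ x → x ≤ n → F j x = b j x + T (b j) x)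
    (hF1 : ∀ j, F j 1 = 1)
    (hFpos : ∀ j, ∀ x : ℕ, 1 ≤ x → x ≤ n → 0 < F j x) :
    ∀ j : Fin m, ∀ u v : ℕ, v < u → u ≤ n →
      ENNReal.ofReal (b j u * u /
          (b j v * v + ∑ k ∈ Finset.Icc 1 (u - v), sSup (F j '' Set.Icc (v + k) u)))
        ≤ PoS n m b T := by
  intro j u v hvu hun
  have hu1 : 1 ≤ u := by omega
  have hn1 : 1 ≤ n := le_trans hu1 hun
  have hMub : ∀ k x : ℕ, v + k ≤ x → x ≤ u →
      F j x ≤ sSup (F j '' Set.Icc (v + k) u) := by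
    intro k x h1 h2
    exact le_csSup ((Set.finite_Icc _ _).image _).bddAbove ⟨x, ⟨h1, h2⟩, rfl⟩
  have hMpos : ∀ k : ℕ, v + k ≤ u → 0 < sSup (F j '' Set.Icc (v + k) u) :=
    fun k hk => lt_of_lt_of_le (hFpos j u hu1 hun) (hMub k u hk le_rfl)
  set den := b j v * (v : ℝ) +
    ∑ k ∈ Finset.Icc 1 (u - v), sSup (F j '' Set.Icc (v + k) u) with hdendef
  have hden_pos : 0 < den := by
    have h1 : 0 ≤ b j v * v := by
      rcases Nat.eq_zero_or_pos v with h | h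
      · simp [h, hb0]
      · exact (mul_pos (hbpos j v h (by omega)) (by exact_mod_cast h)).le
    have h2 : 0 < ∑ k ∈ Finset.Icc 1 (u - v), sSup (F j '' Set.Icc (v + k) u) := by
      apply Finset.sum_pos
      · intro k hk
        rw [Finset.mem_Icc] at hk
        exact hMpos k (by omega)
      · exact ⟨1, Finset.mem_Icc.mpr ⟨le_rfl, by omega⟩⟩
    rw [hdendef]
    linarith
  have hF1' : b j 1 + T (b j) 1 = 1 := by
    rw [← hF j 1 le_rfl hn1]
    exact hF1 j
  have hbj : ∀ x, 1 ≤ x → x ≤ u → 0 < b j x :=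
    fun x h1 h2 => hbpos j x h1 (le_trans h2 hun)
  have key : ∀ ε : ℝ, 0 < ε →
      ENNReal.ofReal (b j u * u / (den + ((u - v : ℕ) : ℝ) * ε)) ≤ PoS n m b T := by
    intro ε hε
    set c : ℕ → ℝ := fun k => sSup (F j '' Set.Icc (v + k) u) + ε with hcdef
    have hc1 : ∀ k, 1 ≤ k → k ≤ u - v → 0 < c k :=
      fun k h1 h2 => add_pos (hMpos k (by omega)) hε
    have hc2 : ∀ k x, 1 ≤ k → k ≤ u - v → v + k ≤ x → x ≤ u →
        b j x + T (b j) x < c k := by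
      intro k x h1 h2 h3 h4
      have hx1 : 1 ≤ x := by omega
      have hxn : x ≤ n := le_trans h4 hun
      calc b j x + T (b j) x = F j x := (hF j x hx1 hxn).symm
        _ ≤ sSup (F j '' Set.Icc (v + k) u) := hMub k x h3 h4
        _ < c k := lt_add_of_pos_right _ hε
    have hclass : InClass n m b T (PoS13.LBGame m b T j u v hvu c) :=
      PoS13.inClass b T j u v hvu c n hun hc1
    have hMCpos : 0 < (PoS13.LBGame m b T j u v hvu c).MinCost :=
      PoS13.minCost_pos b T j u v hvu c hbj hc1
    have hMCle : (PoS13.LBGame m b T j u v hvu c).MinCost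
        ≤ den + ((u - v : ℕ) : ℝ) * ε := by
      have hle := PoS13.minCost_le b T j u v hvu c (hb1 j) hbj hc1
      have hsum : ∑ k ∈ Finset.Icc 1 (u - v), c k
          = (∑ k ∈ Finset.Icc 1 (u - v), sSup (F j '' Set.Icc (v + k) u))
            + ((u - v : ℕ) : ℝ) * ε := by
        rw [hcdef, Finset.sum_add_distrib, Finset.sum_const, Nat.card_Icc,
          nsmul_eq_mul]
        norm_num
      rw [hsum] at hle
      rw [hdendef]
      linarith
    unfold PoS
    refine le_trans ?_ (le_iSup _ (PoS13.LBGame m b T j u v hvu c))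
    refine le_trans ?_ (le_iSup _ ⟨hclass, hMCpos⟩)
    refine le_iInf fun a => ?_
    have hall := PoS13.NE_all_zero b T j u v hvu c hTlin (hb1 j) hF1' hc1 hc2 a.2
    rw [PoS13.SC_allzero b T j u v hvu c hall]
    apply ENNReal.ofReal_le_ofReal
    rw [mul_comm (b j u) (u : ℝ)]
    have hnum : (0 : ℝ) ≤ (u : ℝ) * b j u := by
      have := hbj u hu1 le_rfl
      positivity
    gcongr
  have htend1 : Filter.Tendsto (fun ε : ℝ => den + ((u - v : ℕ) : ℝ) * ε)
      (nhdsWithin 0 (Set.Ioi 0)) (nhds den) := by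
    have hcont : Filter.Tendsto (fun ε : ℝ => den + ((u - v : ℕ) : ℝ) * ε)
        (nhds 0) (nhds (den + ((u - v : ℕ) : ℝ) * 0)) :=
      ((continuous_const.add (continuous_const.mul continuous_id)).tendsto 0)
    simpa using hcont.mono_left nhdsWithin_le_nhds
  have htend : Filter.Tendsto
      (fun ε : ℝ => ENNReal.ofReal (b j u * u / (den + ((u - v : ℕ) : ℝ) * ε)))
      (nhdsWithin 0 (Set.Ioi 0)) (nhds (ENNReal.ofReal (b j u * u / den))) :=
    (ENNReal.continuous_ofReal.tendsto _).comp
      (tendsto_const_nhds.div htend1 hden_pos.ne')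
  exact le_of_tendsto htend
    (Filter.eventually_of_mem self_mem_nhdsWithin fun ε hε => key ε hε)
end
end
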